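/- Let L be a bounded lattice, k ∈ ℕ, and κ an infinite cardinal of uncountable cofinality. If there is a family of κ many pairwise incomparable k-ary polynomial functions on L (in the pointwise order), then there exists n' ∈ ℕ such that L^{n'} (with the product order) contains an antichain of cardinality κ. -/

import Mathlib

universe u

section AuxTerm

inductive LTerm (k : ℕ) : Type u
  | proj : Fin k → LTerm k
  | cvar : ℕ → LTerm k
  | sup : LTerm k → LTerm k → LTerm k
  | inf : LTerm k → LTerm k → LTerm k

namespace LTerm

variable {k : ℕ}

def enc : LTerm.{u} k → ℕ
  | proj i => Nat.pair 0 i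
  | cvar n => Nat.pair 1 n
  | sup s t => Nat.pair 2 (Nat.pair (enc s) (enc t))
  | inf s t => Nat.pair 3 (Nat.pair (enc s) (enc t))

theorem enc_inj : Function.Injective (enc : LTerm.{u} k → ℕ) := by
  intro a
  induction a with
  | proj i => intro b h; cases b <;> simp [enc, Nat.pair_eq_pair] at h <;> exact congrArg proj (Fin.ext h)
  | cvar n => intro b h; cases b <;> simp [enc, Nat.pair_eq_pair] at h <;> simp [h]
  | sup s t ihs iht =>
      intro b h; cases b <;> simp [enc, Nat.pair_eq_pair] at h
      rw [ihs h.1, iht h.2]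
  | inf s t ihs iht =>
      intro b h; cases b <;> simp [enc, Nat.pair_eq_pair] at h
      rw [ihs h.1, iht h.2]

instance : Countable (LTerm.{u} k) := ⟨⟨enc, enc_inj⟩⟩

variable {L : Type u} [Lattice L]

def eval (c : ℕ → L) : LTerm.{u} k → (Fin k → L) → L
  | proj i, x => x i
  | cvar n, _ => c n
  | sup s t, x => eval c s x ⊔ eval c t x
  | inf s t, x => eval c s x ⊓ eval c t x

theorem eval_mono {c c' : ℕ → L} (h : ∀ n, c n ≤ c' n) (t : LTerm.{u} k) (x : Fin k → L) :
    eval c t x ≤ eval c' t x := by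
  induction t with
  | proj i => exact le_rfl
  | cvar n => exact h n
  | sup s t ihs iht => exact sup_le_sup ihs iht
  | inf s t ihs iht => exact inf_le_inf ihs iht

/-- an upper bound for constant indices used -/
def bound : LTerm.{u} k → ℕ
  | proj _ => 0
  | cvar n => n + 1
  | sup s t => max (bound s) (bound t)
  | inf s t => max (bound s) (bound t)

theorem eval_congr {c c' : ℕ → L} (t : LTerm.{u} k) (h : ∀ n < t.bound, c n = c' n)
    (x : Fin k → L) : eval c t x = eval c' t x := by
  induction t with
  | proj i => rfl
  | cvar n => exact h n (Nat.lt_succ_self n)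
  | sup s t ihs iht =>
      have hs := ihs fun n hn => h n (lt_of_lt_of_le hn (le_max_left _ _))
      have ht := iht fun n hn => h n (lt_of_lt_of_le hn (le_max_right _ _))
      simp [eval, hs, ht]
  | inf s t ihs iht =>
      have hs := ihs fun n hn => h n (lt_of_lt_of_le hn (le_max_left _ _))
      have ht := iht fun n hn => h n (lt_of_lt_of_le hn (le_max_right _ _))
      simp [eval, hs, ht]

def rename (f : ℕ → ℕ) : LTerm.{u} k → LTerm.{u} k
  | proj i => proj i
  | cvar n => cvar (f n)
  | sup s t => sup (rename f s) (rename f t)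
  | inf s t => inf (rename f s) (rename f t)

theorem eval_rename (f : ℕ → ℕ) (c : ℕ → L) (t : LTerm.{u} k) (x : Fin k → L) :
    eval c (rename f t) x = eval (fun n => c (f n)) t x := by
  induction t with
  | proj i => rfl
  | cvar n => rfl
  | sup s t ihs iht => simp [eval, rename, ihs, iht]
  | inf s t ihs iht => simp [eval, rename, ihs, iht]

end LTerm

end AuxTerm

/-- `IsPolyFn L n p` says that `p : (Fin n → L) → L` is an `n`-ary lattice polynomial
function on `L`. -/
inductive IsPolyFn (L : Type u) [Lattice L] (n : ℕ) : ((Fin n → L) → L) → Prop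
  | proj (i : Fin n) : IsPolyFn L n fun x => x i
  | const (c : L) : IsPolyFn L n fun _ => c
  | sup {p q : (Fin n → L) → L} : IsPolyFn L n p → IsPolyFn L n q →
      IsPolyFn L n fun x => p x ⊔ q x
  | inf {p q : (Fin n → L) → L} : IsPolyFn L n p → IsPolyFn L n q →
      IsPolyFn L n fun x => p x ⊓ q x

theorem IsPolyFn.exists_term {L : Type u} [Lattice L] [Nonempty L] {k : ℕ} {p : (Fin k → L) → L}
    (hp : IsPolyFn L k p) : ∃ (t : LTerm.{u} k) (c : ℕ → L), p = fun x => LTerm.eval c t x := by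
  induction hp with
  | proj i => exact ⟨LTerm.proj i, fun _ => Classical.arbitrary L, rfl⟩
  | const c => exact ⟨LTerm.cvar 0, fun _ => c, rfl⟩
  | sup hp hq ihp ihq =>
      obtain ⟨t₁, c₁, rfl⟩ := ihp
      obtain ⟨t₂, c₂, rfl⟩ := ihq
      refine ⟨LTerm.sup (t₁.rename (fun n => 2 * n)) (t₂.rename (fun n => 2 * n + 1)),
        fun m => if m % 2 = 0 then c₁ (m / 2) else c₂ (m / 2), ?_⟩
      funext x
      show _ = LTerm.eval _ _ x ⊔ LTerm.eval _ _ x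
      rw [LTerm.eval_rename, LTerm.eval_rename]
      congr 1
      · apply LTerm.eval_congr
        intro n _
        rw [if_pos (by omega : 2 * n % 2 = 0)]
        congr 1
        omega
      · apply LTerm.eval_congr
        intro n _
        rw [if_neg (by omega : ¬(2 * n + 1) % 2 = 0)]
        congr 1
        omega
  | inf hp hq ihp ihq =>
      obtain ⟨t₁, c₁, rfl⟩ := ihp
      obtain ⟨t₂, c₂, rfl⟩ := ihq
      refine ⟨LTerm.inf (t₁.rename (fun n => 2 * n)) (t₂.rename (fun n => 2 * n + 1)),
        fun m => if m % 2 = 0 then c₁ (m / 2) else c₂ (m / 2), ?_⟩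
      funext x
      show _ = LTerm.eval _ _ x ⊓ LTerm.eval _ _ x
      rw [LTerm.eval_rename, LTerm.eval_rename]
      congr 1
      · apply LTerm.eval_congr
        intro n _
        rw [if_pos (by omega : 2 * n % 2 = 0)]
        congr 1
        omega
      · apply LTerm.eval_congr
        intro n _
        rw [if_neg (by omega : ¬(2 * n + 1) % 2 = 0)]
        congr 1
        omega

/-- If a bounded lattice `L` carries `κ` many pairwise incomparable `k`-ary polynomial
functions, where `κ` is an infinite cardinal of uncountable cofinality, then some power
`L^{n'}` contains an antichain of cardinality `κ`. -/
theorem incomparable_polynomials_give_antichain (L : Type u) [Lattice L] [BoundedOrder L]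
    (k : ℕ) (κ : Cardinal.{u}) (hκ : Cardinal.aleph0 ≤ κ)
    (hcof : Cardinal.aleph0 < (Cardinal.ord κ).cof)
    (ι : Type u) (hι : Cardinal.mk ι = κ)
    (P : ι → (Fin k → L) → L) (hP : ∀ i, IsPolyFn L k (P i))
    (hinc : ∀ i j : ι, i ≠ j → ¬P i ≤ P j ∧ ¬P j ≤ P i) :
    ∃ (n' : ℕ) (A : Set (Fin n' → L)),
      IsAntichain (· ≤ ·) A ∧ Cardinal.mk A = κ := by
  -- choose a term and constants for each i
  have : Nonempty L := ⟨⊥⟩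
  choose T C hTC using fun i => (hP i).exists_term
  -- pigeonhole: some fiber of T has cardinality κ
  obtain ⟨t₀, ht₀⟩ : ∃ t₀ : LTerm.{u} k, Cardinal.mk (T ⁻¹' {t₀}) = κ := by
    by_contra h
    push_neg at h
    have hlt : ∀ t : LTerm.{u} k, Cardinal.mk (T ⁻¹' {t}) < κ := by
      intro t
      have hle : Cardinal.mk (T ⁻¹' {t}) ≤ κ := by
        rw [← hι]; exact Cardinal.mk_set_le _
      exact hle.lt_of_ne (h t)
    have hsum : κ ≤ Cardinal.sum fun t : LTerm.{u} k => Cardinal.mk (T ⁻¹' {t}) := by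
      rw [← hι]
      have := Cardinal.mk_congr (Equiv.sigmaFiberEquiv T).symm
      rw [this, Cardinal.mk_sigma]
      exact le_of_eq rfl
    have hsup : (⨆ t : LTerm.{u} k, Cardinal.mk (T ⁻¹' {t})) < κ :=
      Ordinal.iSup_lt_lift (by
        calc Cardinal.lift.{u} (Cardinal.mk (LTerm k)) ≤ Cardinal.lift.{u} Cardinal.aleph0 := by
              exact Cardinal.lift_le.mpr Cardinal.mk_le_aleph0
          _ = Cardinal.aleph0 := by simp
          _ < _ := hcof) hlt
    have : Cardinal.sum (fun t : LTerm.{u} k => Cardinal.mk (T ⁻¹' {t})) < κ := by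
      calc Cardinal.sum (fun t : LTerm.{u} k => Cardinal.mk (T ⁻¹' {t}))
          ≤ Cardinal.mk (LTerm.{u} k) * ⨆ t : LTerm.{u} k, Cardinal.mk (T ⁻¹' {t}) :=
            Cardinal.sum_le_mk_mul_iSup _
        _ < κ := Cardinal.mul_lt_of_lt hκ
            (lt_of_le_of_lt Cardinal.mk_le_aleph0 (lt_of_lt_of_le hcof (Ordinal.cof_ord_le κ)))
            hsup
    exact absurd hsum (not_le_of_gt this)
  -- set up the antichain in L^(bound t₀)
  set m := t₀.bound with hm
  -- truncate/extend constants
  let ext : (Fin m → L) → (ℕ → L) := fun c n => if h : n < m then c ⟨n, h⟩ else ⊥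
  let V : (T ⁻¹' {t₀}) → (Fin m → L) := fun i j => C i.1 j.1
  have hPt : ∀ i : (T ⁻¹' {t₀}), P i.1 = fun x => LTerm.eval (ext (V i)) t₀ x := by
    intro i
    have hi2 : T i.1 = t₀ := i.2
    rw [hTC i.1, hi2]
    funext x
    apply LTerm.eval_congr
    intro n hn
    simp only [ext, V]
    rw [dif_pos hn]
  have key : ∀ i j : (T ⁻¹' {t₀}), V i ≤ V j → P i.1 ≤ P j.1 := by
    intro i j hle
    rw [hPt i, hPt j]
    intro x
    apply LTerm.eval_mono
    intro n
    simp only [ext]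
    split
    · exact hle _
    · exact le_rfl
  have hVinj : Function.Injective V := by
    intro i j hij
    by_contra hne
    have hne' : i.1 ≠ j.1 := fun h => hne (Subtype.ext h)
    exact (hinc i.1 j.1 hne').1 (key i j (le_of_eq hij))
  refine ⟨m, Set.range V, ?_, ?_⟩
  · rintro _ ⟨i, rfl⟩ _ ⟨j, rfl⟩ hne hle
    have hne' : i.1 ≠ j.1 := fun h => hne (by rw [Subtype.ext h])
    exact (hinc i.1 j.1 hne').1 (key i j hle)
  · rw [Cardinal.mk_range_eq _ hVinj, ht₀]
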